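/- Let δ be an element with δ² = −β in the ring R = ℂ[√(−β), δ]/(δ²+β), and work in the formal power series ring R[[t]] (allowing square roots and fractional powers defined by binomial series). Then ((1−t√(−β))/(1+t√(−β)))^{δ/(4√(−β))} + ((1−t√(−β))/(1+t√(−β)))^{−δ/(4√(−β))} = (√(1−t√(−β)) + √(1+t√(−β)))/(1+βt²)^{1/4}. -/

import Mathlib

/-!
STATEMENT 5: In `R[[t]]` where `R` is a commutative ℚ-algebra containing elements
`s = √(−β)` and `δ` with `δ² = −β = s²`, one has
`A^{δ/(4s)} + A^{−δ/(4s)} = (√(1−ts) + √(1+ts))/(1+βt²)^{1/4}`,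
where `A = (1−ts)/(1+ts)` and the fractional powers are the unique power series with
constant term `1` (resp. obvious constant term) satisfying the defining first-order
differential equations:
* `u = A^{δ/(4s)}`       : `(1 − s²t²)·u' = −(δ/2)·u`,  `u(0) = 1`;
* `v = A^{−δ/(4s)}`      : `(1 − s²t²)·v' =  (δ/2)·v`,  `v(0) = 1`;
* `p = √(1−ts)`          : `2(1−ts)·p' = −s·p`,          `p(0) = 1`;
* `q = √(1+ts)`          : `2(1+ts)·q' =  s·q`,          `q(0) = 1`;
* `w = (1+βt²)^{1/4} = (1−s²t²)^{1/4}` : `2(1−s²t²)·w' = −s²t·w`, `w(0) = 1`.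
The claimed identity is `(u + v)·w = p + q`.
-/

open PowerSeries

private lemma aux_cancel {R : Type*} [CommRing R] [Algebra ℚ R] {n : ℕ} (hn : n ≠ 0) {x : R}
    (h : x * (n : R) = 0) : x = 0 := by
  have h2 : (n : ℚ) • x = 0 := by
    rw [Nat.cast_smul_eq_nsmul, nsmul_eq_mul, mul_comm]; exact h
  have h3 := congrArg (fun y => ((n : ℚ))⁻¹ • y) h2
  simpa [smul_smul, inv_mul_cancel₀ (Nat.cast_ne_zero.mpr hn : ((n : ℚ)) ≠ 0)] using h3

private lemma coeff_derivativeFun' {R : Type*} [CommRing R] (f : PowerSeries R) (n : ℕ) :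
    coeff n f.derivativeFun = coeff (n + 1) f * (n + 1) := coeff_derivative f n

private lemma aux_dsub {R : Type*} [CommRing R] (f g : PowerSeries R) :
    (f - g).derivativeFun = f.derivativeFun - g.derivativeFun := by
  ext n
  simp [coeff_derivativeFun', map_sub, sub_mul]

private lemma aux_step {R : Type*} [CommRing R] [Algebra ℚ R] (c : R) (f g : PowerSeries R) (m : ℕ)
    (h : 2 * (1 - C c * X ^ 2) * f.derivativeFun = g)
    (hf : ∀ k, k ≤ m → coeff k f = 0) (hg : coeff m g = 0) :
    coeff (m + 1) f = 0 := by
  have expand : 2 * (1 - C c * X ^ 2) * f.derivativeFun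
      = C 2 * f.derivativeFun - C (2 * c) * (X ^ 2 * f.derivativeFun) := by
    rw [map_mul, map_ofNat]; ring
  have hX : coeff m (X ^ 2 * f.derivativeFun) = 0 := by
    rw [coeff_X_pow_mul']
    split_ifs with h2m
    · rw [coeff_derivativeFun', hf _ (by omega), zero_mul]
    · rfl
  have h' := congrArg (coeff m) h
  rw [expand, map_sub, coeff_C_mul, coeff_C_mul, hX, mul_zero, sub_zero,
    coeff_derivativeFun', hg] at h'
  have h'' : coeff (m + 1) f * ((2 * (m + 1) : ℕ) : R) = 0 := by
    push_cast
    rw [← h']; ring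
  exact aux_cancel (by omega) h''

private lemma aux_zero {R : Type*} [CommRing R] [Algebra ℚ R] (c : R) (a b : PowerSeries R)
    (ha0 : constantCoeff a = 0) (hb0 : constantCoeff b = 0)
    (h1 : 2 * (1 - C c * X ^ 2) * a.derivativeFun = b - C c * X * a)
    (h2 : 2 * (1 - C c * X ^ 2) * b.derivativeFun = C c * a - C c * X * b) :
    a = 0 := by
  have key : ∀ n, coeff n a = 0 ∧ coeff n b = 0 := by
    intro n
    induction n using Nat.strong_induction_on with
    | _ n ih =>
      match n with
      | 0 => exact ⟨by simpa using ha0, by simpa using hb0⟩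
      | Nat.succ m =>
        have ihf : ∀ k, k ≤ m → coeff k a = 0 := fun k hk => (ih k (by omega)).1
        have ihg : ∀ k, k ≤ m → coeff k b = 0 := fun k hk => (ih k (by omega)).2
        have hXa : coeff m (C c * X * a) = 0 := by
          rcases m with _ | m'
          · simp [mul_assoc, coeff_C_mul]
          · rw [mul_assoc, coeff_C_mul, coeff_succ_X_mul, ihf _ (by omega), mul_zero]
        have hXb : coeff m (C c * X * b) = 0 := by
          rcases m with _ | m'
          · simp [mul_assoc, coeff_C_mul]
          · rw [mul_assoc, coeff_C_mul, coeff_succ_X_mul, ihg _ (by omega), mul_zero]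
        constructor
        · refine aux_step c a _ m h1 ihf ?_
          rw [map_sub, ihg _ le_rfl, hXa, sub_zero]
        · refine aux_step c b _ m h2 ihg ?_
          rw [map_sub, coeff_C_mul, ihf _ le_rfl, mul_zero, hXb, sub_zero]
  ext n
  simpa using (key n).1

theorem stmt5 {R : Type*} [CommRing R] [Algebra ℚ R]
    (s δ : R) (hδ : δ ^ 2 = s ^ 2)
    (u v p q w : PowerSeries R)
    (hu0 : constantCoeff u = 1)
    (hu : (1 - C (s ^ 2) * X ^ 2) * u.derivativeFun = C (-((1/2 : ℚ) • δ)) * u)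
    (hv0 : constantCoeff v = 1)
    (hv : (1 - C (s ^ 2) * X ^ 2) * v.derivativeFun = C ((1/2 : ℚ) • δ) * v)
    (hp0 : constantCoeff p = 1)
    (hp : 2 * (1 - C s * X) * p.derivativeFun = C (-s) * p)
    (hq0 : constantCoeff q = 1)
    (hq : 2 * (1 + C s * X) * q.derivativeFun = C s * q)
    (hw0 : constantCoeff w = 1)
    (hw : 2 * (1 - C (s ^ 2) * X ^ 2) * w.derivativeFun = C (-(s ^ 2)) * X * w) :
    (u + v) * w = p + q := by
  set F : PowerSeries R := (u + v) * w with hF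
  set H : PowerSeries R := (v - u) * w with hH
  set G : PowerSeries R := p + q with hG
  set K : PowerSeries R := q - p with hK
  -- scalar facts
  have base : (2 : R) * ((1/2 : ℚ) • δ) = δ := by
    have e1 : (2 : R) * ((1/2 : ℚ) • δ) = (2 : ℚ) • ((1/2 : ℚ) • δ) := by
      conv_rhs => rw [Algebra.smul_def]
      rw [map_ofNat]
    rw [e1, smul_smul]
    norm_num
  have hδ2 : (2 : PowerSeries R) * C ((1/2 : ℚ) • δ) = C δ := by
    rw [show (2 : PowerSeries R) = C 2 from (map_ofNat _ 2).symm, ← map_mul, base]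
  have hδ1 : (2 : PowerSeries R) * C (-((1/2 : ℚ) • δ)) = -(C δ) := by
    rw [show (2 : PowerSeries R) = C 2 from (map_ofNat _ 2).symm, ← map_mul, ← map_neg]
    rw [mul_neg, base]
  have hsq : C (s ^ 2) = (C s) ^ 2 := map_pow _ _ _
  rw [show C (-s) = -(C s) from map_neg _ _] at hp
  have hδC : (C δ) ^ 2 = (C s) ^ 2 := by rw [← map_pow, ← map_pow, hδ]
  rw [hsq] at hu hv hw
  rw [show C (-(s ^ 2)) = -((C s) ^ 2) by rw [map_neg, hsq]] at hw
  -- derivatives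
  have dF : F.derivativeFun = (u + v) * w.derivativeFun + w * (u.derivativeFun + v.derivativeFun) := by
    rw [hF, derivativeFun_mul, derivativeFun_add, smul_eq_mul, smul_eq_mul]
  have dH : H.derivativeFun = (v - u) * w.derivativeFun + w * (v.derivativeFun - u.derivativeFun) := by
    rw [hH, derivativeFun_mul, aux_dsub, smul_eq_mul, smul_eq_mul]
  have dG : G.derivativeFun = p.derivativeFun + q.derivativeFun := by
    rw [hG, derivativeFun_add]
  have dK : K.derivativeFun = q.derivativeFun - p.derivativeFun := by
    rw [hK, aux_dsub]
  set a : PowerSeries R := F - G with ha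
  set b : PowerSeries R := C δ * H - C s * K with hb
  have da : a.derivativeFun = F.derivativeFun - G.derivativeFun := aux_dsub _ _
  have db : b.derivativeFun = C δ * H.derivativeFun - C s * K.derivativeFun := by
    rw [hb, aux_dsub, ← smul_eq_C_mul, ← smul_eq_C_mul, derivativeFun_smul, derivativeFun_smul,
      smul_eq_C_mul, smul_eq_C_mul]
  have ode1 : 2 * (1 - C (s ^ 2) * X ^ 2) * a.derivativeFun = b - C (s ^ 2) * X * a := by
    rw [hsq, da, dF, dG, ha, hb, hF, hG, hH, hK]
    linear_combination (2 * w) * hu + (2 * w) * hv + (u + v) * hw + (u * w) * hδ1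
      + (v * w) * hδ2 - (1 + C s * X) * hp - (1 - C s * X) * hq
  have ode2 : 2 * (1 - C (s ^ 2) * X ^ 2) * b.derivativeFun
      = C (s ^ 2) * a - C (s ^ 2) * X * b := by
    rw [hsq, db, dH, dK, ha, hb, hF, hG, hH, hK]
    linear_combination (2 * w * C δ) * hv - (2 * w * C δ) * hu + (C δ * (v - u)) * hw
      - (w * u * C δ) * hδ1 + (w * v * C δ) * hδ2 + (w * (u + v)) * hδC
      + (C s * (1 + C s * X)) * hp - (C s * (1 - C s * X)) * hq
  have ha0 : constantCoeff a = 0 := by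
    rw [ha, hF, hG]
    simp [map_add, map_sub, map_mul, hu0, hv0, hp0, hq0, hw0]
  have hb0 : constantCoeff b = 0 := by
    rw [hb, hH, hK]
    simp [map_add, map_sub, map_mul, hu0, hv0, hp0, hq0, hw0, constantCoeff_C]
  have := aux_zero (s ^ 2) a b ha0 hb0 ode1 ode2
  rw [ha] at this
  rw [← sub_eq_zero]
  exact this
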